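/- Let d ≥ 1 and let E ⊆ ℝ^d be measurable with finite Lebesgue measure. Then Ĥ^0_R(E) is monotonically non-increasing with respect to R ∈ (0,∞), and lim_{R→+∞} Ĥ^0_R(E) = H^0_1(E) + J^0_1(E) as elements of (−∞,+∞]. (The common value is denoted Ĥ^0(E) and called the 0-fractional perimeter of E.) -/

import Mathlib

open MeasureTheory Metric Filter Topology ENNReal
open scoped symmDiff

noncomputable section

abbrev Rd (d : ℕ) := EuclideanSpace ℝ (Fin d)

/-- Lebesgue measure of the unit ball in `ℝ^d`. -/
def omegaD (d : ℕ) : ℝ := (volume (ball (0 : Rd d) 1)).toReal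

/-- The kernel `|x-y|^{-(d+σ)}`. -/
def kerH (d : ℕ) (σ : ℝ) (x y : Rd d) : ℝ := ‖x - y‖ ^ (-((d : ℝ) + σ))

/-- `H^σ_ρ(E) = ∫_E ∫_{B_ρ(x)∖E} |x-y|^{-(d+σ)} dy dx ∈ [0,+∞]`. -/
def Hfun (d : ℕ) (σ ρ : ℝ) (E : Set (Rd d)) : ℝ≥0∞ :=
  ∫⁻ x in E, ∫⁻ y in ball x ρ \ E, ENNReal.ofReal (kerH d σ x y)

/-- `J^σ_r(E) = -∫_E ∫_{E∖B_r(x)} |x-y|^{-(d+σ)} dy dx`. -/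
def Jfun (d : ℕ) (σ r : ℝ) (E : Set (Rd d)) : ℝ :=
  -∫ x in E, ∫ y in E \ ball x r, kerH d σ x y

/-- The renormalization constant `γ^σ_ρ`. -/
def gam (d : ℕ) (σ ρ : ℝ) : ℝ :=
  if σ = 0 then d * omegaD d * Real.log ρ else d * omegaD d * (1 - ρ ^ (-σ)) / σ

/-- `Ĥ^σ_ρ(E) = H^σ_ρ(E) - γ^σ_ρ |E|`, valued in `(-∞,+∞]` (as an `EReal`). -/
def Hhat (d : ℕ) (σ ρ : ℝ) (E : Set (Rd d)) : EReal :=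
  (Hfun d σ ρ E : EReal) - ((gam d σ ρ * (volume E).toReal : ℝ) : EReal)

namespace H0aux

variable {d : ℕ}

lemma ker_nonneg (x y : Rd d) : 0 ≤ kerH d 0 x y :=
  Real.rpow_nonneg (norm_nonneg _) _

lemma ker_meas : Measurable (fun p : Rd d × Rd d => ENNReal.ofReal (kerH d 0 p.1 p.2)) := by
  apply Measurable.ennreal_ofReal
  have : Measurable (fun p : Rd d × Rd d => ‖p.1 - p.2‖ ^ (-((d:ℝ)+0))) := by fun_prop
  exact this

lemma ker_meas_left (x : Rd d) : Measurable (fun y : Rd d => kerH d 0 x y) := by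
  have : Measurable (fun y : Rd d => ‖x - y‖ ^ (-((d:ℝ)+0))) := by fun_prop
  exact this

lemma ker_le {x y : Rd d} {r : ℝ} (hr : 0 < r) (hd : 1 ≤ d) (h : y ∉ ball x r) :
    kerH d 0 x y ≤ r ^ (-(d:ℝ)) := by
  have hdist : r ≤ ‖x - y‖ := by
    rw [mem_ball, dist_comm, dist_eq_norm] at h
    exact not_lt.mp h
  have : kerH d 0 x y = ‖x - y‖ ^ (-(d:ℝ)) := by rw [kerH, add_zero]
  rw [this]
  apply Real.rpow_le_rpow_of_nonpos hr hdist
  simp [Nat.one_le_iff_ne_zero.mp hd]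

/-- The annulus Bochner integral. -/
lemma ann_bochner (hd : 1 ≤ d) {r R : ℝ} (hr : 0 < r) (hrR : r ≤ R) :
    ∫ z in ball (0 : Rd d) R \ ball (0 : Rd d) r, ‖z‖ ^ (-(d:ℝ)) =
      d * omegaD d * (Real.log R - Real.log r) := by
  haveI : Nonempty (Fin d) := ⟨⟨0, hd⟩⟩
  haveI : Nontrivial (Rd d) := by
    have : 0 < Module.finrank ℝ (Rd d) := by
      rw [finrank_euclideanSpace_fin]; exact hd
    exact Module.nontrivial_of_finrank_pos this
  set f : ℝ → ℝ := (Set.Ico r R).indicator (fun t => t ^ (-(d:ℝ))) with hf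
  have hset : MeasurableSet (ball (0 : Rd d) R \ ball (0 : Rd d) r) :=
    measurableSet_ball.diff measurableSet_ball
  have h1 : ∫ z in ball (0 : Rd d) R \ ball (0 : Rd d) r, ‖z‖ ^ (-(d:ℝ)) =
      ∫ z : Rd d, f ‖z‖ := by
    rw [← integral_indicator hset]
    congr 1
    funext z
    have hmem : z ∈ ball (0 : Rd d) R \ ball (0 : Rd d) r ↔ ‖z‖ ∈ Set.Ico r R := by
      simp [Set.mem_diff, mem_ball_zero_iff, Set.mem_Ico, not_lt, and_comm]
    rw [hf]
    by_cases h : ‖z‖ ∈ Set.Ico r R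
    · rw [Set.indicator_of_mem (hmem.mpr h), Set.indicator_of_mem h]
    · rw [Set.indicator_of_notMem (fun hh => h (hmem.mp hh)), Set.indicator_of_notMem h]
  rw [h1, integral_fun_norm_addHaar volume f, finrank_euclideanSpace_fin]
  have h2 : ∫ y in Set.Ioi (0:ℝ), y ^ (d - 1) • f y = Real.log R - Real.log r := by
    have h3 : ∀ y : ℝ, y ^ (d-1) • f y
        = (Set.Ico r R).indicator (fun t => t ^ (d-1) * t ^ (-(d:ℝ))) y := by
      intro y
      simp only [smul_eq_mul, hf]
      exact (Set.indicator_mul_right (Set.Ico r R) (fun t : ℝ => t ^ (d-1))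
        (fun t : ℝ => t ^ (-(d:ℝ)))).symm
    simp_rw [h3]
    rw [setIntegral_indicator measurableSet_Ico]
    have hinter : Set.Ioi (0:ℝ) ∩ Set.Ico r R = Set.Ico r R :=
      Set.inter_eq_right.mpr (fun y hy => lt_of_lt_of_le hr hy.1)
    rw [hinter]
    have h4 : ∫ y in Set.Ico r R, y ^ (d-1) * y ^ (-(d:ℝ))
        = ∫ y in Set.Ico r R, y⁻¹ := by
      refine setIntegral_congr_fun measurableSet_Ico (fun y hy => ?_)
      have hy0 : 0 < y := lt_of_lt_of_le hr hy.1
      rw [← Real.rpow_natCast y (d-1), ← Real.rpow_add hy0]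
      have : ((d - 1 : ℕ) : ℝ) + (-(d:ℝ)) = -1 := by
        rw [Nat.cast_sub hd]; push_cast; ring
      rw [this, Real.rpow_neg_one]
    rw [h4, integral_Ico_eq_integral_Ioo, ← integral_Ioc_eq_integral_Ioo,
      ← intervalIntegral.integral_of_le hrR, integral_inv_of_pos hr (lt_of_lt_of_le hr hrR),
      Real.log_div (ne_of_gt (lt_of_lt_of_le hr hrR)) (ne_of_gt hr)]
  rw [h2, nsmul_eq_mul, smul_eq_mul, omegaD]
  simp only [Measure.real]
  ring

/-- The annulus lintegral. -/
lemma ann_lintegral (hd : 1 ≤ d) (x : Rd d) {r R : ℝ} (hr : 0 < r) (hrR : r ≤ R) :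
    ∫⁻ y in ball x R \ ball x r, ENNReal.ofReal (kerH d 0 x y) =
      ENNReal.ofReal (d * omegaD d * (Real.log R - Real.log r)) := by
  have hmp : MeasurePreserving (fun z : Rd d => x + z) volume volume :=
    measurePreserving_add_left volume x
  have hemb : MeasurableEmbedding (fun z : Rd d => x + z) :=
    measurableEmbedding_addLeft x
  have hpre : (fun z : Rd d => x + z) ⁻¹' (ball x R \ ball x r) =
      ball (0 : Rd d) R \ ball (0 : Rd d) r := by
    ext z
    simp [mem_ball, dist_eq_norm, Set.mem_diff]
  have h := hmp.setLIntegral_comp_preimage_emb hemb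
    (fun y => ENNReal.ofReal (kerH d 0 x y)) (ball x R \ ball x r)
  rw [hpre] at h
  rw [← h]
  have hker : ∀ z : Rd d, kerH d 0 x (x + z) = ‖z‖ ^ (-(d:ℝ)) := by
    intro z
    simp only [kerH, add_zero]
    congr 1
    rw [show x - (x + z) = -z by abel, norm_neg]
  simp only [hker]
  have hmeasann : MeasurableSet (ball (0 : Rd d) R \ ball (0 : Rd d) r) :=
    measurableSet_ball.diff measurableSet_ball
  have hint : IntegrableOn (fun z : Rd d => ‖z‖ ^ (-(d:ℝ)))
      (ball (0 : Rd d) R \ ball (0 : Rd d) r) volume := by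
    apply Measure.integrableOn_of_bounded
    · exact ne_of_lt (lt_of_le_of_lt (measure_mono Set.diff_subset) measure_ball_lt_top)
    · have : Measurable (fun z : Rd d => ‖z‖ ^ (-(d:ℝ))) := by fun_prop
      exact this.aestronglyMeasurable
    · filter_upwards [ae_restrict_mem hmeasann] with z hz
      rw [Real.norm_eq_abs, abs_of_nonneg (Real.rpow_nonneg (norm_nonneg _) _)]
      have hz1 : r ≤ ‖z‖ := by
        have := hz.2; rw [mem_ball_zero_iff] at this; linarith [not_lt.mp (fun h => this h)]
      calc ‖z‖ ^ (-(d:ℝ)) ≤ r ^ (-(d:ℝ)) := by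
            apply Real.rpow_le_rpow_of_nonpos hr hz1
            simp [Nat.one_le_iff_ne_zero.mp hd]
        _ ≤ |r ^ (-(d:ℝ))| := le_abs_self _
  rw [← ofReal_integral_eq_lintegral_ofReal hint]
  · rw [ann_bochner hd hr hrR]
  · filter_upwards with z using Real.rpow_nonneg (norm_nonneg _) _

/-- Measurability of sliced inner integrals. -/
lemma inner_meas (S : Set (Rd d × Rd d)) (hS : MeasurableSet S) :
    Measurable (fun x : Rd d => ∫⁻ y in Prod.mk x ⁻¹' S, ENNReal.ofReal (kerH d 0 x y)) := by
  have h : ∀ x : Rd d, (∫⁻ y in Prod.mk x ⁻¹' S, ENNReal.ofReal (kerH d 0 x y))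
      = ∫⁻ y, S.indicator (fun p : Rd d × Rd d => ENNReal.ofReal (kerH d 0 p.1 p.2)) (x, y) := by
    intro x
    rw [← lintegral_indicator (measurable_prodMk_left hS)
      (fun y => ENNReal.ofReal (kerH d 0 x y))]
    rfl
  simp_rw [h]
  exact Measurable.lintegral_prod_right' (ker_meas.indicator hS)

variable {E : Set (Rd d)} (hE : MeasurableSet E)

lemma measSB (ρ : ℝ) : MeasurableSet {p : Rd d × Rd d | dist p.2 p.1 < ρ} :=
  (isOpen_lt (continuous_snd.dist continuous_fst) continuous_const).measurableSet

include hE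

lemma meas_innerH (ρ : ℝ) :
    Measurable (fun x : Rd d => ∫⁻ y in ball x ρ \ E, ENNReal.ofReal (kerH d 0 x y)) :=
  inner_meas ({p : Rd d × Rd d | dist p.2 p.1 < ρ} \ (Prod.snd ⁻¹' E))
    ((measSB ρ).diff (hE.preimage measurable_snd))

lemma meas_innerA (r R : ℝ) :
    Measurable (fun x : Rd d =>
      ∫⁻ y in E ∩ (ball x R \ ball x r), ENNReal.ofReal (kerH d 0 x y)) :=
  inner_meas ((Prod.snd ⁻¹' E) ∩ ({p : Rd d × Rd d | dist p.2 p.1 < R}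
      \ {p : Rd d × Rd d | dist p.2 p.1 < r}))
    ((hE.preimage measurable_snd).inter ((measSB R).diff (measSB r)))

lemma meas_innerC (R : ℝ) :
    Measurable (fun x : Rd d => ∫⁻ y in E \ ball x R, ENNReal.ofReal (kerH d 0 x y)) :=
  inner_meas ((Prod.snd ⁻¹' E) \ {p : Rd d × Rd d | dist p.2 p.1 < R})
    ((hE.preimage measurable_snd).diff (measSB R))

/-- Pointwise splitting identity. -/
lemma inner_split (hd : 1 ≤ d) (x : Rd d) {r R : ℝ} (hr : 0 < r) (hrR : r ≤ R) :
    (∫⁻ y in ball x R \ E, ENNReal.ofReal (kerH d 0 x y)) +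
      (∫⁻ y in E ∩ (ball x R \ ball x r), ENNReal.ofReal (kerH d 0 x y)) =
    (∫⁻ y in ball x r \ E, ENNReal.ofReal (kerH d 0 x y)) +
      ENNReal.ofReal (d * omegaD d * (Real.log R - Real.log r)) := by
  set A := ball x R \ ball x r with hA
  have hAmeas : MeasurableSet A := measurableSet_ball.diff measurableSet_ball
  have hsplit1 : ball x R \ E = (ball x r \ E) ∪ (A \ E) := by
    rw [hA, ← Set.union_diff_distrib, Set.union_diff_cancel (ball_subset_ball hrR)]
  have hdisj1 : Disjoint (ball x r \ E) (A \ E) :=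
    Set.disjoint_of_subset Set.diff_subset Set.diff_subset
      (Set.disjoint_right.mpr (fun y hy => hy.2))
  have hsplit2 : (A \ E) ∪ (A ∩ E) = A := Set.diff_union_inter A E
  have hdisj2 : Disjoint (A \ E) (A ∩ E) :=
    Set.disjoint_right.mpr (fun y hyt hys => hys.2 hyt.2)
  rw [hsplit1, lintegral_union (hAmeas.diff hE) hdisj1, Set.inter_comm E A]
  rw [add_assoc, ← lintegral_union (hAmeas.inter hE) hdisj2, hsplit2,
    ann_lintegral hd x hr hrR]

/-- The main splitting identity for `Hfun`. -/
lemma Hfun_split (hd : 1 ≤ d) {r R : ℝ} (hr : 0 < r) (hrR : r ≤ R) :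
    Hfun d 0 R E + (∫⁻ x in E, ∫⁻ y in E ∩ (ball x R \ ball x r),
        ENNReal.ofReal (kerH d 0 x y)) =
      Hfun d 0 r E + ENNReal.ofReal (d * omegaD d * (Real.log R - Real.log r)) * volume E := by
  rw [Hfun, ← lintegral_add_left (meas_innerH hE R), Hfun]
  have : ∫⁻ x in E, ((∫⁻ y in ball x R \ E, ENNReal.ofReal (kerH d 0 x y)) +
      ∫⁻ y in E ∩ (ball x R \ ball x r), ENNReal.ofReal (kerH d 0 x y))
      = ∫⁻ x in E, ((∫⁻ y in ball x r \ E, ENNReal.ofReal (kerH d 0 x y)) +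
        ENNReal.ofReal (d * omegaD d * (Real.log R - Real.log r))) := by
    refine lintegral_congr (fun x => ?_)
    exact inner_split hE hd x hr hrR
  rw [this, lintegral_add_left (meas_innerH hE r), setLIntegral_const, mul_comm]

omit hE in
lemma inner_bound (hd : 1 ≤ d) {r : ℝ} (hr : 0 < r) (x : Rd d) {S : Set (Rd d)}
    (hS : S ⊆ E \ ball x r) :
    ∫⁻ y in S, ENNReal.ofReal (kerH d 0 x y) ≤ ENNReal.ofReal (r ^ (-(d:ℝ))) * volume E := by
  calc ∫⁻ y in S, ENNReal.ofReal (kerH d 0 x y)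
      ≤ ∫⁻ _ in S, ENNReal.ofReal (r ^ (-(d:ℝ))) ∂volume := by
        refine setLIntegral_mono measurable_const (fun y hy => ?_)
        exact ENNReal.ofReal_le_ofReal (ker_le hr hd (hS hy).2)
    _ = ENNReal.ofReal (r ^ (-(d:ℝ))) * volume S := by rw [setLIntegral_const]
    _ ≤ ENNReal.ofReal (r ^ (-(d:ℝ))) * volume E :=
        mul_le_mul_right (measure_mono (hS.trans Set.diff_subset)) _


lemma AA_le (hd : 1 ≤ d) (r R : ℝ) (hr : 0 < r) :
    (∫⁻ x in E, ∫⁻ y in E ∩ (ball x R \ ball x r), ENNReal.ofReal (kerH d 0 x y))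
      ≤ ENNReal.ofReal (r ^ (-(d:ℝ))) * volume E * volume E := by
  calc (∫⁻ x in E, ∫⁻ y in E ∩ (ball x R \ ball x r), ENNReal.ofReal (kerH d 0 x y))
      ≤ ∫⁻ _ in E, (ENNReal.ofReal (r ^ (-(d:ℝ))) * volume E) ∂volume := by
        refine setLIntegral_mono' hE (fun x _ => ?_)
        exact inner_bound hd hr x (fun y hy => ⟨hy.1, hy.2.2⟩)
    _ = ENNReal.ofReal (r ^ (-(d:ℝ))) * volume E * volume E := by rw [setLIntegral_const]

lemma CC_le (hd : 1 ≤ d) (R : ℝ) (hR : 0 < R) :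
    (∫⁻ x in E, ∫⁻ y in E \ ball x R, ENNReal.ofReal (kerH d 0 x y))
      ≤ ENNReal.ofReal (R ^ (-(d:ℝ))) * volume E * volume E := by
  calc (∫⁻ x in E, ∫⁻ y in E \ ball x R, ENNReal.ofReal (kerH d 0 x y))
      ≤ ∫⁻ _ in E, (ENNReal.ofReal (R ^ (-(d:ℝ))) * volume E) ∂volume := by
        refine setLIntegral_mono' hE (fun x _ => ?_)
        exact inner_bound hd hR x (fun y hy => hy)
    _ = ENNReal.ofReal (R ^ (-(d:ℝ))) * volume E * volume E := by rw [setLIntegral_const]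

lemma C_split {R : ℝ} (hR : 1 ≤ R) :
    (∫⁻ x in E, ∫⁻ y in E ∩ (ball x R \ ball x 1), ENNReal.ofReal (kerH d 0 x y)) +
      (∫⁻ x in E, ∫⁻ y in E \ ball x R, ENNReal.ofReal (kerH d 0 x y)) =
    ∫⁻ x in E, ∫⁻ y in E \ ball x 1, ENNReal.ofReal (kerH d 0 x y) := by
  rw [← lintegral_add_left (meas_innerA hE 1 R)]
  refine lintegral_congr (fun x => ?_)
  have hsplit : (E ∩ (ball x R \ ball x 1)) ∪ (E \ ball x R) = E \ ball x 1 := by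
    ext y
    simp only [Set.mem_union, Set.mem_inter_iff, Set.mem_diff]
    constructor
    · rintro (⟨h1, _, h3⟩ | ⟨h1, h2⟩)
      · exact ⟨h1, h3⟩
      · exact ⟨h1, fun h => h2 (ball_subset_ball hR h)⟩
    · rintro ⟨h1, h2⟩
      by_cases hy : y ∈ ball x R
      · exact Or.inl ⟨h1, hy, h2⟩
      · exact Or.inr ⟨h1, hy⟩
  have hdisj : Disjoint (E ∩ (ball x R \ ball x 1)) (E \ ball x R) :=
    Set.disjoint_right.mpr (fun y hyt hys => hyt.2 hys.2.1)
  rw [← lintegral_union (hE.diff measurableSet_ball) hdisj, hsplit]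

lemma Jfun_eq (hd : 1 ≤ d) (hEfin : volume E < ⊤) :
    Jfun d 0 1 E = -(∫⁻ x in E, ∫⁻ y in E \ ball x 1, ENNReal.ofReal (kerH d 0 x y)).toReal := by
  rw [Jfun, neg_inj]
  have step1 : ∀ x : Rd d, ∫ y in E \ ball x 1, kerH d 0 x y
      = (∫⁻ y in E \ ball x 1, ENNReal.ofReal (kerH d 0 x y)).toReal := by
    intro x
    rw [integral_eq_lintegral_of_nonneg_ae (ae_of_all _ (fun y => ker_nonneg x y))
      (ker_meas_left x).aestronglyMeasurable]
  simp_rw [step1]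
  have hfin : ∀ x : Rd d,
      (∫⁻ y in E \ ball x 1, ENNReal.ofReal (kerH d 0 x y)) ≠ ⊤ := by
    intro x
    exact ne_of_lt (lt_of_le_of_lt (inner_bound hd one_pos x (fun y hy => hy))
      (ENNReal.mul_lt_top ENNReal.ofReal_lt_top hEfin))
  rw [integral_eq_lintegral_of_nonneg_ae (ae_of_all _ (fun x => ENNReal.toReal_nonneg))
    ((meas_innerC hE 1).ennreal_toReal).aestronglyMeasurable]
  congr 1
  exact lintegral_congr (fun x => ENNReal.ofReal_toReal (hfin x))

end H0aux

open H0aux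

theorem Hhat_zero_tendsto
    (d : ℕ) (hd : 1 ≤ d)
    (E : Set (Rd d)) (hE : MeasurableSet E) (hEfin : volume E < ⊤) :
    AntitoneOn (fun R => Hhat d 0 R E) (Set.Ioi (0 : ℝ)) ∧
    Tendsto (fun R => Hhat d 0 R E) atTop
      (𝓝 ((Hfun d 0 1 E : EReal) + ((Jfun d 0 1 E : ℝ) : EReal))) := by
  have hd0 : (0:ℝ) < d := by exact_mod_cast hd
  set AA : ℝ → ℝ → ℝ≥0∞ := fun r R => ∫⁻ x in E, ∫⁻ y in E ∩ (ball x R \ ball x r),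
    ENNReal.ofReal (kerH d 0 x y) with hAAdef
  set CC : ℝ → ℝ≥0∞ := fun R => ∫⁻ x in E, ∫⁻ y in E \ ball x R,
    ENNReal.ofReal (kerH d 0 x y) with hCCdef
  have hAAfin : ∀ {r R : ℝ}, 0 < r → AA r R ≠ ⊤ := by
    intro r R hr
    exact ne_of_lt (lt_of_le_of_lt (AA_le hE hd r R hr)
      (ENNReal.mul_lt_top (ENNReal.mul_lt_top ENNReal.ofReal_lt_top hEfin) hEfin))
  have hCCfin : ∀ {R : ℝ}, 0 < R → CC R ≠ ⊤ := by
    intro R hR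
    exact ne_of_lt (lt_of_le_of_lt (CC_le hE hd R hR)
      (ENNReal.mul_lt_top (ENNReal.mul_lt_top ENNReal.ofReal_lt_top hEfin) hEfin))
  have key : ∀ {r R : ℝ}, 0 < r → r ≤ R → Hfun d 0 R E + AA r R
      = Hfun d 0 r E + ENNReal.ofReal (d * omegaD d * (Real.log R - Real.log r)) * volume E :=
    fun hr hrR => Hfun_split hE hd hr hrR
  have hcfin : ∀ c : ℝ, ENNReal.ofReal c * volume E ≠ ⊤ :=
    fun c => ENNReal.mul_ne_top ENNReal.ofReal_ne_top hEfin.ne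
  have topiff : ∀ {r R : ℝ}, 0 < r → r ≤ R → (Hfun d 0 R E = ⊤ ↔ Hfun d 0 r E = ⊤) := by
    intro r R hr hrR
    constructor
    · intro h
      have hk := key hr hrR
      rw [h, top_add] at hk
      rcases ENNReal.add_eq_top.mp hk.symm with h' | h'
      · exact h'
      · exact absurd h' (hcfin _)
    · intro h
      have hk := key hr hrR
      rw [h, top_add] at hk
      rcases ENNReal.add_eq_top.mp hk with h' | h'
      · exact h'
      · exact absurd h' (hAAfin hr)
  have topiff1 : ∀ {R : ℝ}, 0 < R → (Hfun d 0 R E = ⊤ ↔ Hfun d 0 1 E = ⊤) := by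
    intro R hR
    rcases le_total R 1 with h | h
    · exact (topiff hR h).symm
    · exact topiff one_pos h
  by_cases htop : Hfun d 0 1 E = ⊤
  · have hall : ∀ R : ℝ, 0 < R → Hhat d 0 R E = ⊤ := by
      intro R hR
      rw [Hhat, (topiff1 hR).mpr htop, EReal.coe_ennreal_top, EReal.top_sub_coe]
    constructor
    · intro r hr R hR hrR
      simp only
      rw [hall R (Set.mem_Ioi.mp hR), hall r (Set.mem_Ioi.mp hr)]
    · have hval : (Hfun d 0 1 E : EReal) + ((Jfun d 0 1 E : ℝ) : EReal) = ⊤ := by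
        rw [htop, EReal.coe_ennreal_top]
        exact EReal.top_add_coe _
      rw [hval]
      refine Tendsto.congr' ?_ tendsto_const_nhds
      filter_upwards [eventually_gt_atTop 0] with R hR
      exact (hall R hR).symm
  · have hfin : ∀ {R : ℝ}, 0 < R → Hfun d 0 R E ≠ ⊤ :=
      fun hR h => htop ((topiff1 hR).mp h)
    set h : ℝ → ℝ := fun R => (Hfun d 0 R E).toReal
      - d * omegaD d * Real.log R * (volume E).toReal with hh
    have hgam : ∀ ρ : ℝ, gam d 0 ρ = d * omegaD d * Real.log ρ := by
      intro ρ; simp [gam]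
    have hHhat : ∀ {R : ℝ}, 0 < R → Hhat d 0 R E = ((h R : ℝ) : EReal) := by
      intro R hR
      rw [Hhat, hgam, ← ENNReal.ofReal_toReal (hfin hR), EReal.coe_ennreal_ofReal,
        max_eq_left ENNReal.toReal_nonneg, ← EReal.coe_sub]
    have keyR : ∀ {r R : ℝ}, 0 < r → r ≤ R → h R = h r - (AA r R).toReal := by
      intro r R hr hrR
      have hc : (0:ℝ) ≤ d * omegaD d * (Real.log R - Real.log r) := by
        have hlog : Real.log r ≤ Real.log R :=
          (Real.log_le_log_iff hr (lt_of_lt_of_le hr hrR)).mpr hrR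
        have hω : (0:ℝ) ≤ omegaD d := ENNReal.toReal_nonneg
        have hdd : (0:ℝ) ≤ (d:ℝ) := Nat.cast_nonneg d
        exact mul_nonneg (mul_nonneg hdd hω) (by linarith)
      have hk := congrArg ENNReal.toReal (key hr hrR)
      rw [ENNReal.toReal_add (hfin (lt_of_lt_of_le hr hrR)) (hAAfin hr),
        ENNReal.toReal_add (hfin hr) (hcfin _),
        ENNReal.toReal_mul, ENNReal.toReal_ofReal hc] at hk
      have hexp : d * omegaD d * (Real.log R - Real.log r) * (volume E).toReal
          = d * omegaD d * Real.log R * (volume E).toReal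
            - d * omegaD d * Real.log r * (volume E).toReal := by ring
      simp only [hh]
      linarith [hk, hexp]
    have hmono : ∀ {r R : ℝ}, 0 < r → r ≤ R → h R ≤ h r := by
      intro r R hr hrR
      rw [keyR hr hrR]
      linarith [ENNReal.toReal_nonneg (a := AA r R)]
    constructor
    · intro r hr R hR hrR
      simp only
      rw [hHhat (Set.mem_Ioi.mp hR), hHhat (Set.mem_Ioi.mp hr)]
      exact_mod_cast hmono (Set.mem_Ioi.mp hr) hrR
    · have hCR : Tendsto (fun R => (CC R).toReal) atTop (𝓝 0) := by
        apply squeeze_zero' (Eventually.of_forall (fun R => ENNReal.toReal_nonneg))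
          (g := fun R => R ^ (-(d:ℝ)) * (volume E).toReal * (volume E).toReal)
        · filter_upwards [eventually_gt_atTop 0] with R hR
          have := CC_le hE hd R hR
          have h2 : (ENNReal.ofReal (R ^ (-(d:ℝ))) * volume E * volume E).toReal
              = R ^ (-(d:ℝ)) * (volume E).toReal * (volume E).toReal := by
            rw [ENNReal.toReal_mul, ENNReal.toReal_mul,
              ENNReal.toReal_ofReal (Real.rpow_nonneg hR.le _)]
          calc (CC R).toReal ≤ (ENNReal.ofReal (R ^ (-(d:ℝ))) * volume E * volume E).toReal :=
                ENNReal.toReal_mono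
                  (ENNReal.mul_ne_top (ENNReal.mul_ne_top ENNReal.ofReal_ne_top hEfin.ne)
                    hEfin.ne) this
            _ = _ := h2
        · have := ((tendsto_rpow_neg_atTop hd0).mul_const ((volume E).toReal)).mul_const
            ((volume E).toReal)
          simpa using this
      have hACC : ∀ {R : ℝ}, 1 ≤ R → (AA 1 R).toReal = (CC 1).toReal - (CC R).toReal := by
        intro R hR
        have hs := C_split hE hR
        have := congrArg ENNReal.toReal hs
        rw [ENNReal.toReal_add (hAAfin one_pos) (hCCfin (lt_of_lt_of_le one_pos hR))] at this
        linarith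
      have h1val : h 1 = (Hfun d 0 1 E).toReal := by
        simp [hh, Real.log_one]
      have hhlim : Tendsto h atTop (𝓝 ((Hfun d 0 1 E).toReal - (CC 1).toReal)) := by
        have heq : ∀ᶠ R in atTop, ((Hfun d 0 1 E).toReal - (CC 1).toReal) + (CC R).toReal
            = h R := by
          filter_upwards [eventually_ge_atTop 1] with R hR
          rw [keyR one_pos hR, hACC hR, h1val]
          ring
        refine Tendsto.congr' heq ?_
        have := tendsto_const_nhds (α := ℝ)
          (x := (Hfun d 0 1 E).toReal - (CC 1).toReal) (f := atTop).add hCR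
        simpa using this
      have hval : ((Hfun d 0 1 E : EReal) + ((Jfun d 0 1 E : ℝ) : EReal))
          = (((Hfun d 0 1 E).toReal - (CC 1).toReal : ℝ) : EReal) := by
        rw [Jfun_eq hE hd hEfin, ← ENNReal.ofReal_toReal htop, EReal.coe_ennreal_ofReal,
          max_eq_left ENNReal.toReal_nonneg, ← EReal.coe_add]
        norm_num
        rfl
      rw [hval]
      have hco := (continuous_coe_real_ereal.tendsto
        ((Hfun d 0 1 E).toReal - (CC 1).toReal)).comp hhlim
      refine hco.congr' ?_
      filter_upwards [eventually_gt_atTop 0] with R hR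
      exact (hHhat hR).symm
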